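/- Let Δ₂ be the convex hull of {(−2,0),(2,0),(0,1),(0,−1)} in ℝ², let k ≥ 1 be an integer, let T₀ = conv{(0,0),(2,k−1),(0,k)} ⊂ kΔ₂ (a triangle of area k), and let g : kΔ₂ → ℝ be a continuous concave W₂-invariant function. Then (1/k)·∫_{T₀} g dA ≥ (1 − 1/k)·g(0,0)/3 + (1/2)·g(2,k−1) + (1/6 + 1/(3k))·g(0,k). -/

import Mathlib

open MeasureTheory Pointwise

noncomputable section

open Set
set_option maxHeartbeats 1000000

-- helper: 3-point convex combination lies in hull
lemma comb3_mem (A B C : ℝ × ℝ) {α β γ : ℝ} (hα : 0 ≤ α) (hβ : 0 ≤ β) (hγ : 0 ≤ γ)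
    (h : α + β + γ = 1) : α • A + β • B + γ • C ∈ convexHull ℝ ({A, B, C} : Set (ℝ × ℝ)) := by
  have := (convex_convexHull ℝ ({A, B, C} : Set (ℝ × ℝ))).sum_mem
    (t := (Finset.univ : Finset (Fin 3))) (w := ![α, β, γ]) (z := ![A, B, C])
    (fun i _ => by fin_cases i <;> simpa)
    (by simp [Fin.sum_univ_three, h])
    (fun i _ => subset_convexHull ℝ _ (by fin_cases i <;> simp))
  simpa [Fin.sum_univ_three] using this

lemma comb2_mem {s : Set (ℝ × ℝ)} {x y : ℝ × ℝ} (hx : x ∈ s) (hy : y ∈ s) {t1 t2 : ℝ}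
    (h1 : 0 ≤ t1) (h2 : 0 ≤ t2) (h : t1 + t2 = 1) :
    t1 • x + t2 • y ∈ convexHull ℝ s :=
  segment_subset_convexHull hx hy ⟨t1, t2, h1, h2, h, rfl⟩

lemma triangle_mem_rep {A B C p : ℝ × ℝ} (hp : p ∈ convexHull ℝ ({A, B, C} : Set (ℝ × ℝ))) :
    ∃ α β γ : ℝ, 0 ≤ α ∧ 0 ≤ β ∧ 0 ≤ γ ∧ α + β + γ = 1 ∧ p = α • A + β • B + γ • C := by
  rw [convexHull_insert ⟨B, by simp⟩, mem_convexJoin] at hp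
  obtain ⟨A', hA', z, hz, hseg⟩ := hp
  rw [Set.mem_singleton_iff] at hA'
  subst hA'
  rw [convexHull_pair] at hz
  obtain ⟨b1, b2, hb1, hb2, hb, rfl⟩ := hz
  obtain ⟨a1, a2, ha1, ha2, ha, rfl⟩ := hseg
  refine ⟨a1, a2 * b1, a2 * b2, ha1, by positivity, by positivity, by nlinarith, ?_⟩
  simp [smul_add, smul_smul, add_assoc]

def Sstd : Set (ℝ × ℝ) := {p : ℝ × ℝ | 0 ≤ p.1 ∧ 0 ≤ p.2 ∧ p.1 + p.2 ≤ 1}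

lemma Sstd_measurable : MeasurableSet Sstd := by
  have h1 : MeasurableSet {p : ℝ × ℝ | 0 ≤ p.1} := measurableSet_le measurable_const measurable_fst
  have h2 : MeasurableSet {p : ℝ × ℝ | 0 ≤ p.2} := measurableSet_le measurable_const measurable_snd
  have h3 : MeasurableSet {p : ℝ × ℝ | p.1 + p.2 ≤ 1} :=
    measurableSet_le (measurable_fst.add measurable_snd) measurable_const
  rw [show Sstd = {p : ℝ × ℝ | 0 ≤ p.1} ∩ ({p : ℝ × ℝ | 0 ≤ p.2} ∩ {p : ℝ × ℝ | p.1 + p.2 ≤ 1})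
        from by ext p; simp [Sstd, and_assoc]]
  exact h1.inter (h2.inter h3)

lemma Sstd_eq : convexHull ℝ ({((0:ℝ),(0:ℝ)), (1,0), (0,1)} : Set (ℝ × ℝ)) = Sstd := by
  apply le_antisymm
  · apply convexHull_min
    · intro p hp
      rcases hp with h | h | h <;> subst h <;> norm_num [Sstd]
    · intro x hx y hy a b ha hb hab
      obtain ⟨hx1, hx2, hx3⟩ := hx
      obtain ⟨hy1, hy2, hy3⟩ := hy
      refine ⟨by simpa using by nlinarith [mul_nonneg ha hx1, mul_nonneg hb hy1], ?_, ?_⟩ <;>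
        simp only [Prod.fst_add, Prod.snd_add, Prod.smul_fst, Prod.smul_snd, smul_eq_mul] <;>
        nlinarith [mul_nonneg ha hx2, mul_nonneg hb hy2]
  · intro p hp
    obtain ⟨h1, h2, h3⟩ := hp
    have := comb3_mem ((0:ℝ),(0:ℝ)) (1,0) (0,1) (α := 1 - p.1 - p.2) (β := p.1) (γ := p.2)
      (by linarith) h1 h2 (by ring)
    convert this using 1
    ext <;> simp

lemma Sstd_compact : IsCompact Sstd := by
  rw [← Sstd_eq]; exact (Set.toFinite _).isCompact_convexHull ℝ

lemma interval_poly (u t : ℝ) (P Q : ℝ) :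
    ∫ y in (0:ℝ)..t, (P + Q * y) = P * t + Q * (t ^ 2 / 2) := by
  have h1 : ∫ y in (0:ℝ)..t, (P + Q * y)
      = (∫ y in (0:ℝ)..t, P) + ∫ y in (0:ℝ)..t, Q * y := by
    apply intervalIntegral.integral_add intervalIntegrable_const
    exact (continuous_const.mul continuous_id).intervalIntegrable 0 t
  rw [h1, intervalIntegral.integral_const, intervalIntegral.integral_const_mul,
    integral_id, smul_eq_mul]
  ring

lemma integral_Sstd (A B C : ℝ) :
    ∫ p in Sstd, (A + B * p.1 + C * p.2) = A / 2 + B / 6 + C / 6 := by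
  set f : ℝ × ℝ → ℝ := fun p => A + B * p.1 + C * p.2 with hf
  have hcont : Continuous f := by fun_prop
  have hint : IntegrableOn f Sstd := hcont.continuousOn.integrableOn_compact Sstd_compact
  rw [← integral_indicator Sstd_measurable]
  have hint' : Integrable (Sstd.indicator f) := (integrable_indicator_iff Sstd_measurable).2 hint
  rw [MeasureTheory.Measure.volume_eq_prod] at hint' ⊢
  rw [MeasureTheory.integral_prod _ hint']
  have key : ∀ x : ℝ, (∫ y : ℝ, Sstd.indicator f (x, y))
      = (Icc (0:ℝ) 1).indicator (fun x => (A + B * x) * (1 - x) + C * ((1 - x) ^ 2 / 2)) x := by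
    intro x
    by_cases hx : x ∈ Icc (0:ℝ) 1
    · have hfun : (fun y => Sstd.indicator f (x, y))
          = (Icc (0:ℝ) (1 - x)).indicator (fun y => (A + B * x) + C * y) := by
        funext y
        by_cases hy : y ∈ Icc (0:ℝ) (1 - x)
        · rw [Set.indicator_of_mem hy, Set.indicator_of_mem
            (by exact ⟨hx.1, hy.1, by have := hy.2; simp only []; linarith⟩ : (x, y) ∈ Sstd)]
        · rw [Set.indicator_of_notMem hy, Set.indicator_of_notMem]
          intro hmem
          exact hy ⟨hmem.2.1, by have := hmem.2.2; simp only [] at this ⊢; linarith⟩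
      rw [hfun, integral_indicator measurableSet_Icc,
        MeasureTheory.integral_Icc_eq_integral_Ioc,
        ← intervalIntegral.integral_of_le (by linarith [hx.2] : (0:ℝ) ≤ 1 - x),
        interval_poly x (1 - x) (A + B * x) C, Set.indicator_of_mem hx]
    · have hzero : (fun y => Sstd.indicator f (x, y)) = fun _ => (0:ℝ) := by
        funext y
        apply Set.indicator_of_notMem
        intro hmem
        obtain ⟨h1, h2, h3⟩ := hmem
        simp only [] at h1 h2 h3
        exact hx ⟨h1, by linarith⟩
      rw [hzero, integral_zero, Set.indicator_of_notMem hx]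
  rw [integral_congr_ae (Filter.Eventually.of_forall key)]
  rw [integral_indicator measurableSet_Icc, MeasureTheory.integral_Icc_eq_integral_Ioc,
    ← intervalIntegral.integral_of_le (by norm_num : (0:ℝ) ≤ 1)]
  have expand : ∀ x : ℝ, (A + B * x) * (1 - x) + C * ((1 - x) ^ 2 / 2)
      = (A + C / 2) + (B - A - C) * x + (-B + C / 2) * x ^ 2 := by intro x; ring
  rw [intervalIntegral.integral_congr (fun x _ => expand x)]
  have h1 : ∫ x in (0:ℝ)..1, ((A + C / 2) + (B - A - C) * x + (-B + C / 2) * x ^ 2)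
      = ((∫ x in (0:ℝ)..1, (A + C / 2)) + ∫ x in (0:ℝ)..1, (B - A - C) * x)
        + ∫ x in (0:ℝ)..1, (-B + C / 2) * x ^ 2 := by
    rw [intervalIntegral.integral_add, intervalIntegral.integral_add]
    · exact intervalIntegrable_const
    · exact (continuous_const.mul continuous_id).intervalIntegrable 0 1
    · apply ContinuousOn.intervalIntegrable; fun_prop
    · exact (continuous_const.mul (continuous_pow 2)).intervalIntegrable 0 1
  rw [h1, intervalIntegral.integral_const, intervalIntegral.integral_const_mul,
    intervalIntegral.integral_const_mul, integral_id, integral_pow]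
  norm_num
  ring

/-- The linear map `(u,v) ↦ (p u + q v, r u + s v)`. -/
def Mmap (p q r s : ℝ) : ℝ × ℝ →L[ℝ] ℝ × ℝ :=
  LinearMap.toContinuousLinearMap
    { toFun := fun u => (p * u.1 + q * u.2, r * u.1 + s * u.2)
      map_add' := by intro x y; ext <;> simp <;> ring
      map_smul' := by intro c x; ext <;> simp <;> ring }

lemma Mmap_det (p q r s : ℝ) : (Mmap p q r s).det = p * s - q * r := by
  have : (Mmap p q r s : ℝ × ℝ →ₗ[ℝ] ℝ × ℝ).det = p * s - q * r := by
    rw [← LinearMap.det_toMatrix (Module.Basis.finTwoProd ℝ), Matrix.det_fin_two]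
    simp [LinearMap.toMatrix_apply, Mmap]
  exact this

lemma triangle_lower (K : Set (ℝ × ℝ)) (g : ℝ × ℝ → ℝ) (a b c : ℝ × ℝ)
    (hsub : convexHull ℝ ({a, b, c} : Set (ℝ × ℝ)) ⊆ K)
    (hg : ContinuousOn g K) (hconc : ConcaveOn ℝ K g)
    (hdet : 0 < (b.1 - a.1) * (c.2 - a.2) - (c.1 - a.1) * (b.2 - a.2)) :
    ((b.1 - a.1) * (c.2 - a.2) - (c.1 - a.1) * (b.2 - a.2)) * (g a + g b + g c) / 6 ≤
      ∫ x in convexHull ℝ ({a, b, c} : Set (ℝ × ℝ)), g x := by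
  set p := b.1 - a.1; set q := c.1 - a.1; set r := b.2 - a.2; set s := c.2 - a.2
  set d := p * s - q * r with hd
  set M := Mmap p q r s with hM
  set f : ℝ × ℝ → ℝ × ℝ := fun u => a + M u with hfdef
  have hMapp : ∀ u : ℝ × ℝ, M u = (p * u.1 + q * u.2, r * u.1 + s * u.2) := fun u => rfl
  have hcomb : ∀ u : ℝ × ℝ, f u = (1 - u.1 - u.2) • a + u.1 • b + u.2 • c := by
    intro u
    ext <;> simp [hfdef, hMapp, p, q, r, s] <;> ring
  -- the affine map
  have haff : ∀ u : ℝ × ℝ, f u = M u +ᵥ a := by intro u; simp [hfdef, add_comm]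
  set F : ℝ × ℝ →ᵃ[ℝ] ℝ × ℝ :=
    { toFun := f
      linear := (M : ℝ × ℝ →ₗ[ℝ] ℝ × ℝ)
      map_vadd' := by
        intro x v
        show f (v + x) = M v + f x
        simp [hfdef, map_add]; abel } with hF
  have himg : f '' Sstd = convexHull ℝ ({a, b, c} : Set (ℝ × ℝ)) := by
    rw [← Sstd_eq, show f = ⇑F from rfl, AffineMap.image_convexHull]
    congr 1
    rw [Set.image_insert_eq, Set.image_insert_eq, Set.image_singleton]
    have e0 : F ((0:ℝ), (0:ℝ)) = a := by
      show f _ = a; ext <;> simp [hfdef, hMapp]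
    have e1 : F ((1:ℝ), (0:ℝ)) = b := by
      show f _ = b; ext <;> simp [hfdef, hMapp, p, r]
    have e2 : F ((0:ℝ), (1:ℝ)) = c := by
      show f _ = c; ext <;> simp [hfdef, hMapp, q, s]
    rw [e0, e1, e2]
  have hinj : Set.InjOn f Sstd := by
    intro u _ v _ huv
    have h1 : p * u.1 + q * u.2 = p * v.1 + q * v.2 := by
      have := congrArg Prod.fst huv; simpa [hfdef, hMapp] using this
    have h2 : r * u.1 + s * u.2 = r * v.1 + s * v.2 := by
      have := congrArg Prod.snd huv; simpa [hfdef, hMapp] using this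
    have hdne : d ≠ 0 := ne_of_gt hdet
    have e1 : d * (u.1 - v.1) = 0 := by rw [hd]; linear_combination s * h1 - q * h2
    have e2 : d * (u.2 - v.2) = 0 := by rw [hd]; linear_combination p * h2 - r * h1
    ext
    · have h := (mul_eq_zero.1 e1).resolve_left hdne; linarith
    · have h := (mul_eq_zero.1 e2).resolve_left hdne; linarith
  have hderiv : ∀ x ∈ Sstd, HasFDerivWithinAt f M Sstd x := by
    intro x _
    exact ((M.hasFDerivAt).const_add a).hasFDerivWithinAt
  have hCoV : ∫ x in convexHull ℝ ({a, b, c} : Set (ℝ × ℝ)), g x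
      = ∫ u in Sstd, |(M).det| • g (f u) := by
    rw [← himg]
    exact integral_image_eq_integral_abs_det_fderiv_smul volume Sstd_measurable hderiv hinj g
  have habs : |M.det| = d := by rw [hM, Mmap_det]; exact abs_of_pos hdet
  rw [hCoV]
  -- lower bound pointwise
  have hmemK : ∀ u ∈ Sstd, f u ∈ K := by
    intro u hu
    exact hsub (himg ▸ Set.mem_image_of_mem f hu)
  have haK : a ∈ K := hsub (subset_convexHull ℝ _ (by simp))
  have hbK : b ∈ K := hsub (subset_convexHull ℝ _ (by simp))
  have hcK : c ∈ K := hsub (subset_convexHull ℝ _ (by simp))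
  have hlow : ∀ u ∈ Sstd, d * g a + (d * (g b - g a)) * u.1 + (d * (g c - g a)) * u.2
      ≤ |M.det| • g (f u) := by
    intro u hu
    obtain ⟨hu1, hu2, hu3⟩ := hu
    have hcc := hconc.le_map_sum (t := (Finset.univ : Finset (Fin 3)))
      (w := ![1 - u.1 - u.2, u.1, u.2]) (p := ![a, b, c])
      (fun i _ => by fin_cases i <;> simp <;> linarith)
      (by simp [Fin.sum_univ_three]; ring)
      (fun i _ => by fin_cases i <;> [exact haK; exact hbK; exact hcK])
    rw [Fin.sum_univ_three, Fin.sum_univ_three] at hcc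
    simp only [Matrix.cons_val_zero, Matrix.cons_val_one, Matrix.head_cons,
      Matrix.cons_val_two, Matrix.tail_cons, smul_eq_mul] at hcc
    rw [habs, smul_eq_mul]
    rw [← hcomb u] at hcc
    nlinarith [hcc, hdet]
  -- integrability
  have hScomp := Sstd_compact
  have hglhs : IntegrableOn (fun u : ℝ × ℝ => d * g a + (d * (g b - g a)) * u.1
      + (d * (g c - g a)) * u.2) Sstd := by
    apply ContinuousOn.integrableOn_compact hScomp; fun_prop
  have hgrhs : IntegrableOn (fun u : ℝ × ℝ => |M.det| • g (f u)) Sstd := by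
    apply ContinuousOn.integrableOn_compact hScomp
    refine ContinuousOn.const_smul (g := fun u => g (f u)) ?_ |M.det|
    apply hg.comp _ hmemK
    have : Continuous f := by
      rw [hfdef]; exact continuous_const.add M.continuous
    exact this.continuousOn
  have hmono := setIntegral_mono_on hglhs hgrhs Sstd_measurable hlow
  calc d * (g a + g b + g c) / 6
      = (d * g a) / 2 + (d * (g b - g a)) / 6 + (d * (g c - g a)) / 6 := by ring
    _ = ∫ u in Sstd, (d * g a + (d * (g b - g a)) * u.1 + (d * (g c - g a)) * u.2) :=
        (integral_Sstd _ _ _).symm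
    _ ≤ _ := hmono

/-- The moment polytope of `X₂ = (ℙ¹×ℙ¹)/(ℤ/4ℤ)` polarized by `-2K`. -/
def Δ₂ : Set (ℝ × ℝ) := convexHull ℝ {((-2 : ℝ), (0 : ℝ)), (2, 0), (0, 1), (0, -1)}

/-- The triangle `T₀ = conv{(0,0),(2,k-1),(0,k)} ⊂ kΔ₂` (of area `k`). -/
def T₀ (k : ℕ) : Set (ℝ × ℝ) :=
  convexHull ℝ {((0 : ℝ), (0 : ℝ)), ((2 : ℝ), (k : ℝ) - 1), ((0 : ℝ), (k : ℝ))}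

/-- Estimate on the top triangle `T₀` for a continuous concave `W₂`-invariant `g` on `kΔ₂`:
`(1/k)∫_{T₀} g ≥ (1 − 1/k)·g(0,0)/3 + (1/2)·g(2,k−1) + (1/6 + 1/(3k))·g(0,k)`. -/
theorem top_triangle_estimate_X2 (k : ℕ) (hk : 1 ≤ k) (g : ℝ × ℝ → ℝ)
    (hg : ContinuousOn g ((k : ℝ) • Δ₂)) (hconc : ConcaveOn ℝ ((k : ℝ) • Δ₂) g)
    (hinv : ∀ p ∈ (k : ℝ) • Δ₂, g (-p.1, p.2) = g p ∧ g (p.1, -p.2) = g p) :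
    (1 / (k : ℝ)) * (∫ x in T₀ k, g x) ≥
      (1 - 1 / (k : ℝ)) * g ((0 : ℝ), (0 : ℝ)) / 3
        + (1 / 2) * g ((2 : ℝ), (k : ℝ) - 1)
        + (1 / 6 + 1 / (3 * (k : ℝ))) * g ((0 : ℝ), (k : ℝ)) := by
  have hk1 : (1 : ℝ) ≤ (k : ℝ) := by exact_mod_cast hk
  have hk0 : (0 : ℝ) < (k : ℝ) := by linarith
  have hkne : (k : ℝ) ≠ 0 := ne_of_gt hk0
  have hK1 : (0 : ℝ) ≤ (k : ℝ) - 1 := by linarith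
  -- memberships in kΔ₂
  have hA : ((0 : ℝ), (0 : ℝ)) ∈ (k : ℝ) • Δ₂ := by
    refine Set.mem_smul_set.2 ⟨(1/2 : ℝ) • ((-2 : ℝ), (0 : ℝ)) + (1/2 : ℝ) • ((2 : ℝ), (0 : ℝ)),
      comb2_mem (by norm_num) (by norm_num) (by norm_num) (by norm_num) (by norm_num), ?_⟩
    ext <;> norm_num
  have hB : ((2 : ℝ), (k : ℝ) - 1) ∈ (k : ℝ) • Δ₂ := by
    refine Set.mem_smul_set.2 ⟨(1/(k:ℝ)) • ((2 : ℝ), (0 : ℝ)) + (1 - 1/(k:ℝ)) • ((0 : ℝ), (1 : ℝ)),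
      comb2_mem (by norm_num) (by norm_num) (by positivity)
        (by rw [sub_nonneg]; exact div_le_one_of_le₀ hk1 (le_of_lt hk0)) (by ring), ?_⟩
    ext <;> simp <;> field_simp
  have hB' : ((-2 : ℝ), (k : ℝ) - 1) ∈ (k : ℝ) • Δ₂ := by
    refine Set.mem_smul_set.2 ⟨(1/(k:ℝ)) • ((-2 : ℝ), (0 : ℝ)) + (1 - 1/(k:ℝ)) • ((0 : ℝ), (1 : ℝ)),
      comb2_mem (by norm_num) (by norm_num) (by positivity)
        (by rw [sub_nonneg]; exact div_le_one_of_le₀ hk1 (le_of_lt hk0)) (by ring), ?_⟩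
    ext <;> simp <;> field_simp
  have hC : ((0 : ℝ), (k : ℝ)) ∈ (k : ℝ) • Δ₂ := by
    refine Set.mem_smul_set.2 ⟨((0 : ℝ), (1 : ℝ)), subset_convexHull ℝ _ (by norm_num), ?_⟩
    ext <;> simp
  have hC' : ((0 : ℝ), -(k : ℝ)) ∈ (k : ℝ) • Δ₂ := by
    refine Set.mem_smul_set.2 ⟨((0 : ℝ), (-1 : ℝ)), subset_convexHull ℝ _ (by norm_num), ?_⟩
    ext <;> simp
  have hm : ((0 : ℝ), (k : ℝ) - 1) ∈ (k : ℝ) • Δ₂ := by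
    refine Set.mem_smul_set.2 ⟨((2*(k:ℝ)-1)/(2*(k:ℝ))) • ((0 : ℝ), (1 : ℝ))
        + (1 - (2*(k:ℝ)-1)/(2*(k:ℝ))) • ((0 : ℝ), (-1 : ℝ)),
      comb2_mem (by norm_num) (by norm_num) (by apply div_nonneg <;> linarith)
        (by rw [sub_nonneg]; apply div_le_one_of_le₀ (by linarith) (by linarith)) (by ring), ?_⟩
    ext <;> simp <;> field_simp <;> ring
  -- invariance consequences
  have hBB' : g ((-2 : ℝ), (k : ℝ) - 1) = g ((2 : ℝ), (k : ℝ) - 1) := by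
    have := (hinv ((2 : ℝ), (k : ℝ) - 1) hB).1
    simpa using this
  have hCC' : g ((0 : ℝ), -(k : ℝ)) = g ((0 : ℝ), (k : ℝ)) := by
    have := (hinv ((0 : ℝ), (k : ℝ)) hC).2
    simpa using this
  -- concavity: value at m dominates
  have hmB : g ((2 : ℝ), (k : ℝ) - 1) ≤ g ((0 : ℝ), (k : ℝ) - 1) := by
    have h := hconc.2 hB' hB (by norm_num : (0:ℝ) ≤ 1/2) (by norm_num : (0:ℝ) ≤ 1/2) (by norm_num)
    have heq : (1/2 : ℝ) • ((-2 : ℝ), (k : ℝ) - 1) + (1/2 : ℝ) • ((2 : ℝ), (k : ℝ) - 1)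
        = ((0 : ℝ), (k : ℝ) - 1) := by ext <;> norm_num <;> ring
    rw [heq] at h
    simp only [smul_eq_mul] at h
    linarith [h, hBB'.symm.le, hBB'.le]
  have hmC : g ((0 : ℝ), (k : ℝ)) ≤ g ((0 : ℝ), (k : ℝ) - 1) := by
    set t : ℝ := (2*(k:ℝ)-1)/(2*(k:ℝ)) with ht
    have ht0 : 0 ≤ t := by rw [ht]; apply div_nonneg <;> linarith
    have ht1 : 0 ≤ 1 - t := by
      rw [sub_nonneg, ht]; apply div_le_one_of_le₀ (by linarith) (by linarith)
    have h := hconc.2 hC hC' ht0 ht1 (by ring)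
    have heq : t • ((0 : ℝ), (k : ℝ)) + (1 - t) • ((0 : ℝ), -(k : ℝ))
        = ((0 : ℝ), (k : ℝ) - 1) := by
      ext <;> simp [ht] <;> field_simp <;> ring
    rw [heq] at h
    simp only [smul_eq_mul] at h
    nlinarith [h, hCC'.le, hCC'.symm.le]
  -- the two subtriangles
  set T00 : Set (ℝ × ℝ) := convexHull ℝ
    {((0 : ℝ), (0 : ℝ)), ((2 : ℝ), (k : ℝ) - 1), ((0 : ℝ), (k : ℝ) - 1)} with hT00
  set T01 : Set (ℝ × ℝ) := convexHull ℝ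
    {((0 : ℝ), (k : ℝ) - 1), ((2 : ℝ), (k : ℝ) - 1), ((0 : ℝ), (k : ℝ))} with hT01
  have hsub00 : T00 ⊆ (k : ℝ) • Δ₂ := by
    apply convexHull_min _ ((convex_convexHull ℝ _).smul _)
    intro x hx
    rcases hx with h | h | h <;> subst h <;> assumption
  have hsub01 : T01 ⊆ (k : ℝ) • Δ₂ := by
    apply convexHull_min _ ((convex_convexHull ℝ _).smul _)
    intro x hx
    rcases hx with h | h | h <;> subst h <;> assumption
  -- splitting T₀ = T00 ∪ T01
  have hmT0 : ((0 : ℝ), (k : ℝ) - 1) ∈ T₀ k := by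
    rw [T₀]
    have h := comb3_mem ((0 : ℝ), (0 : ℝ)) ((2 : ℝ), (k : ℝ) - 1) ((0 : ℝ), (k : ℝ))
      (α := 1 - ((k:ℝ)-1)/(k:ℝ)) (β := 0) (γ := ((k:ℝ)-1)/(k:ℝ))
      (by rw [sub_nonneg]; apply div_le_one_of_le₀ (by linarith) (by linarith))
      le_rfl (by positivity) (by ring)
    convert h using 1
    ext <;> simp <;> field_simp
  have hsplit : T₀ k = T00 ∪ T01 := by
    apply le_antisymm
    · intro pt hpt
      rw [T₀] at hpt
      obtain ⟨α, β, γ, hα, hβ, hγ, hsum, rfl⟩ := triangle_mem_rep hpt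
      by_cases hcase : γ ≤ α * ((k:ℝ) - 1)
      · left
        by_cases hzero : (k:ℝ) - 1 = 0
        · have hγ0 : γ = 0 := le_antisymm (by nlinarith) hγ
          have h := comb3_mem ((0 : ℝ), (0 : ℝ)) ((2 : ℝ), (k : ℝ) - 1) ((0 : ℝ), (k : ℝ) - 1)
            hα hβ le_rfl (γ := 0) (by rw [hγ0] at hsum; linarith)
          rw [hT00]
          convert h using 2
          ext <;> simp [hγ0, hzero]
        · have hK1pos : 0 < (k:ℝ) - 1 := lt_of_le_of_ne hK1 (Ne.symm hzero)
          have h := comb3_mem ((0 : ℝ), (0 : ℝ)) ((2 : ℝ), (k : ℝ) - 1) ((0 : ℝ), (k : ℝ) - 1)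
            (α := α - γ/((k:ℝ)-1)) (β := β) (γ := γ*(k:ℝ)/((k:ℝ)-1))
            (by rw [sub_nonneg]; rw [div_le_iff₀ hK1pos]; linarith)
            hβ (by positivity)
            (by field_simp; ring_nf; nlinarith [hsum])
          rw [hT00]
          convert h using 1
          ext <;> simp <;> field_simp <;> ring
      · right
        push_neg at hcase
        have h := comb3_mem ((0 : ℝ), (k : ℝ) - 1) ((2 : ℝ), (k : ℝ) - 1) ((0 : ℝ), (k : ℝ))
          (α := α * (k:ℝ)) (β := β) (γ := γ - α * ((k:ℝ)-1))
          (by positivity) hβ (by linarith)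
          (by nlinarith [hsum])
        rw [hT01]
        convert h using 1
        ext <;> simp <;> ring
    · apply Set.union_subset
      · apply convexHull_min _ (convex_convexHull ℝ _)
        intro x hx
        rcases hx with h | h | h <;> subst h
        · exact subset_convexHull ℝ _ (by norm_num)
        · exact subset_convexHull ℝ _ (by norm_num)
        · exact hmT0
      · apply convexHull_min _ (convex_convexHull ℝ _)
        intro x hx
        rcases hx with h | h | h <;> subst h
        · exact hmT0
        · exact subset_convexHull ℝ _ (by norm_num)
        · exact subset_convexHull ℝ _ (by norm_num)
  -- a.e. disjointness
  have hlin : IsLinearMap ℝ (fun p : ℝ × ℝ => p.2) := ⟨fun _ _ => rfl, fun _ _ => rfl⟩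
  have hdisj : AEDisjoint volume T00 T01 := by
    have hinter : T00 ∩ T01 ⊆ {p : ℝ × ℝ | p.2 = (k:ℝ) - 1} := by
      intro p hp
      have h1 : p.2 ≤ (k:ℝ) - 1 := by
        have := convexHull_min (s := {((0 : ℝ), (0 : ℝ)), ((2 : ℝ), (k : ℝ) - 1),
            ((0 : ℝ), (k : ℝ) - 1)}) (t := {p : ℝ × ℝ | p.2 ≤ (k:ℝ) - 1})
          (by intro x hx; rcases hx with h | h | h <;> subst h <;> simp <;> linarith)
          (convex_halfSpace_le hlin _)
        exact this hp.1
      have h2 : (k:ℝ) - 1 ≤ p.2 := by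
        have := convexHull_min (s := {((0 : ℝ), (k : ℝ) - 1), ((2 : ℝ), (k : ℝ) - 1),
            ((0 : ℝ), (k : ℝ))}) (t := {p : ℝ × ℝ | (k:ℝ) - 1 ≤ p.2})
          (by intro x hx; rcases hx with h | h | h <;> subst h <;> simp <;> linarith)
          (convex_halfSpace_ge hlin _)
        exact this hp.2
      exact le_antisymm h1 h2
    apply measure_mono_null hinter
    have : {p : ℝ × ℝ | p.2 = (k:ℝ) - 1} = (Set.univ : Set ℝ) ×ˢ ({(k:ℝ) - 1} : Set ℝ) := by
      ext p
      simp only [Set.mem_setOf_eq, Set.mem_prod, Set.mem_univ, true_and,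
        Set.mem_singleton_iff]
    rw [this, MeasureTheory.Measure.volume_eq_prod, MeasureTheory.Measure.prod_prod]
    simp
  -- integrability
  have hint00 : IntegrableOn g T00 :=
    (hg.mono hsub00).integrableOn_compact ((Set.toFinite _).isCompact_convexHull ℝ)
  have hint01 : IntegrableOn g T01 :=
    (hg.mono hsub01).integrableOn_compact ((Set.toFinite _).isCompact_convexHull ℝ)
  have hTsum : ∫ x in T₀ k, g x = (∫ x in T00, g x) + ∫ x in T01, g x := by
    rw [hsplit]
    exact integral_union_ae hdisj
      ((Set.toFinite _).isClosed_convexHull ℝ).measurableSet.nullMeasurableSet hint00 hint01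
  -- estimates on the two triangles
  have h01 : 2 * (g ((0 : ℝ), (k : ℝ) - 1) + g ((2 : ℝ), (k : ℝ) - 1) + g ((0 : ℝ), (k : ℝ))) / 6
      ≤ ∫ x in T01, g x := by
    have h := triangle_lower ((k : ℝ) • Δ₂) g ((0 : ℝ), (k : ℝ) - 1) ((2 : ℝ), (k : ℝ) - 1)
      ((0 : ℝ), (k : ℝ)) hsub01 hg hconc (by norm_num)
    convert h using 2 <;> norm_num
  have h00 : 2 * ((k:ℝ) - 1) * (g ((0 : ℝ), (0 : ℝ)) + g ((2 : ℝ), (k : ℝ) - 1)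
      + g ((0 : ℝ), (k : ℝ) - 1)) / 6 ≤ ∫ x in T00, g x := by
    by_cases hzero : (k:ℝ) - 1 = 0
    · have hnull : volume T00 = 0 := by
        refine measure_mono_null (?_ : T00 ⊆ {p : ℝ × ℝ | p.2 = (k:ℝ) - 1}) ?_
        · apply convexHull_min _ (convex_hyperplane hlin _)
          intro x hx; rcases hx with h | h | h <;> subst h <;> simp [hzero]
        · have : {p : ℝ × ℝ | p.2 = (k:ℝ) - 1} = (Set.univ : Set ℝ) ×ˢ ({(k:ℝ) - 1} : Set ℝ) := by
            ext p
            simp only [Set.mem_setOf_eq, Set.mem_prod, Set.mem_univ, true_and,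
              Set.mem_singleton_iff]
          rw [this, MeasureTheory.Measure.volume_eq_prod, MeasureTheory.Measure.prod_prod]
          simp
      rw [Measure.restrict_eq_zero.2 hnull]
      simp [hzero]
    · have hK1pos : 0 < (k:ℝ) - 1 := lt_of_le_of_ne hK1 (Ne.symm hzero)
      have h := triangle_lower ((k : ℝ) • Δ₂) g ((0 : ℝ), (0 : ℝ)) ((2 : ℝ), (k : ℝ) - 1)
        ((0 : ℝ), (k : ℝ) - 1) hsub00 hg hconc
        (by simp
            exact_mod_cast (by linarith [hK1pos] : (1:ℝ) < (k:ℝ)))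
      convert h using 2 <;> ring
  -- final arithmetic
  rw [ge_iff_le]
  have key : (k : ℝ) * ((1 - 1 / (k : ℝ)) * g ((0 : ℝ), (0 : ℝ)) / 3
        + (1 / 2) * g ((2 : ℝ), (k : ℝ) - 1)
        + (1 / 6 + 1 / (3 * (k : ℝ))) * g ((0 : ℝ), (k : ℝ)))
      ≤ ∫ x in T₀ k, g x := by
    rw [hTsum]
    have e : (k : ℝ) * ((1 - 1 / (k : ℝ)) * g ((0 : ℝ), (0 : ℝ)) / 3
        + (1 / 2) * g ((2 : ℝ), (k : ℝ) - 1)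
        + (1 / 6 + 1 / (3 * (k : ℝ))) * g ((0 : ℝ), (k : ℝ)))
        = ((k:ℝ) - 1) * g ((0 : ℝ), (0 : ℝ)) / 3 + (k:ℝ) * g ((2 : ℝ), (k : ℝ) - 1) / 2
          + ((k:ℝ)/6 + 1/3) * g ((0 : ℝ), (k : ℝ)) := by
      field_simp
    rw [e]
    nlinarith [h00, h01, mul_nonneg (le_of_lt hk0) (sub_nonneg.2 hmB),
      mul_nonneg (le_of_lt hk0) (sub_nonneg.2 hmC)]
  calc (1 - 1 / (k : ℝ)) * g ((0 : ℝ), (0 : ℝ)) / 3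
        + (1 / 2) * g ((2 : ℝ), (k : ℝ) - 1)
        + (1 / 6 + 1 / (3 * (k : ℝ))) * g ((0 : ℝ), (k : ℝ))
      = (1 / (k:ℝ)) * ((k : ℝ) * ((1 - 1 / (k : ℝ)) * g ((0 : ℝ), (0 : ℝ)) / 3
        + (1 / 2) * g ((2 : ℝ), (k : ℝ) - 1)
        + (1 / 6 + 1 / (3 * (k : ℝ))) * g ((0 : ℝ), (k : ℝ)))) := by
        field_simp
    _ ≤ (1 / (k:ℝ)) * ∫ x in T₀ k, g x := by
        apply mul_le_mul_of_nonneg_left key (by positivity)
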